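/- Let G be a finite simple graph with n vertices and m edges, and let v be a vertex of G. Suppose G contains a spanning subgraph G' in which v is adjacent to every other vertex and every vertex has degree at least 2 in G'. Let Δ be the maximum degree in G' among vertices different from v. Then G' contains a matching of size at least ⌊n/2⌋ / (2Δ − 1) consisting of edges not incident to v. -/
import Mathlib

theorem stmt_9 {V : Type*} [Fintype V] [DecidableEq V] (n : ℕ)
    (hcard : Fintype.card V = n)
    (G G' : SimpleGraph V) [DecidableRel G.Adj] [DecidableRel G'.Adj]
    (hsub : G' ≤ G) (v : V)
    (hv : ∀ u : V, u ≠ v → G'.Adj v u)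
    (hdeg2 : ∀ u : V, 2 ≤ G'.degree u)
    (Δ : ℕ) (hΔ : ∀ u : V, u ≠ v → G'.degree u ≤ Δ) :
    ∃ M : Finset (Sym2 V), M ⊆ G'.edgeFinset ∧
      (∀ e ∈ M, ∀ f ∈ M, e ≠ f → ∀ x : V, x ∈ e → x ∉ f) ∧
      (∀ e ∈ M, v ∉ e) ∧
      (n / 2) / (2 * Δ - 1) ≤ M.card := by
  classical
  subst hcard
  by_cases hΔ0 : Δ = 0
  · exact ⟨∅, by simp, by simp, by simp, by simp [hΔ0]⟩
  have hΔ1 : 1 ≤ Δ := Nat.one_le_iff_ne_zero.mpr hΔ0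
  set S : Finset (Sym2 V) := G'.edgeFinset.filter (fun e => v ∉ e) with hSdef
  -- membership count of a Sym2 is at most 2
  have mem_card : ∀ e : Sym2 V, (Finset.univ.filter (· ∈ e)).card ≤ 2 := by
    intro e
    refine Sym2.inductionOn e ?_
    intro a b
    calc (Finset.univ.filter (· ∈ s(a,b))).card ≤ ({a, b} : Finset V).card := by
          apply Finset.card_le_card
          intro x hx
          rw [Finset.mem_filter] at hx
          rcases Sym2.mem_iff.mp hx.2 with h | h <;> simp [h]
      _ ≤ 2 := Finset.card_insert_le a {b} |>.trans (by simp)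
  -- every u ≠ v lies in some edge of S
  have key : ∀ u : V, u ≠ v → ∃ e, e ∈ S ∧ u ∈ e := by
    intro u hu
    have h1 : (G'.incidenceFinset u).card = G'.degree u :=
      G'.card_incidenceFinset_eq_degree u
    have h2 : 2 ≤ (G'.incidenceFinset u).card := by rw [h1]; exact hdeg2 u
    have h3 : ((G'.incidenceFinset u) \ {s(u,v)}).Nonempty := by
      rw [← Finset.card_pos]
      have := Finset.le_card_sdiff ({s(u,v)} : Finset (Sym2 V)) (G'.incidenceFinset u)
      have : (G'.incidenceFinset u).card - ({s(u,v)} : Finset (Sym2 V)).card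
          ≤ ((G'.incidenceFinset u) \ {s(u,v)}).card := Finset.le_card_sdiff _ _
      simp only [Finset.card_singleton] at this
      omega
    obtain ⟨e, he⟩ := h3
    rw [Finset.mem_sdiff, Finset.mem_singleton] at he
    have he1 := (G'.mem_incidenceFinset u e).mp he.1
    refine ⟨e, ?_, he1.2⟩
    rw [hSdef, Finset.mem_filter]
    refine ⟨SimpleGraph.mem_edgeFinset.mpr he1.1, ?_⟩
    intro hve
    exact he.2 ((Sym2.mem_and_mem_iff hu).mp ⟨he1.2, hve⟩)
  -- lower bound: n/2 ≤ S.card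
  have hlow : Fintype.card V / 2 ≤ S.card := by
    have hg : ∀ u : V, ∃ e, u ≠ v → e ∈ S ∧ u ∈ e := by
      intro u
      by_cases hu : u = v
      · exact ⟨s(v,v), fun h => absurd hu h⟩
      · obtain ⟨e, he⟩ := key u hu
        exact ⟨e, fun _ => he⟩
    choose g hgspec using hg
    have hcount : (Finset.univ.erase v).card ≤ 2 * ((Finset.univ.erase v).image g).card := by
      apply Finset.card_le_mul_card_image
      intro b _
      calc ((Finset.univ.erase v).filter (fun a => g a = b)).card
          ≤ (Finset.univ.filter (· ∈ b)).card := by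
            apply Finset.card_le_card
            intro x hx
            rw [Finset.mem_filter] at hx ⊢
            obtain ⟨hx1, hx2⟩ := hx
            have := (hgspec x (Finset.ne_of_mem_erase hx1)).2
            rw [hx2] at this
            exact ⟨Finset.mem_univ x, this⟩
        _ ≤ 2 := mem_card b
    have himg : (Finset.univ.erase v).image g ⊆ S := by
      intro e he
      rw [Finset.mem_image] at he
      obtain ⟨u, hu, rfl⟩ := he
      exact (hgspec u (Finset.ne_of_mem_erase hu)).1
    have h1 : Fintype.card V - 1 ≤ 2 * S.card := by
      have := Finset.card_le_card himg
      have hcardv : (Finset.univ.erase v).card = Fintype.card V - 1 := by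
        rw [Finset.card_erase_of_mem (Finset.mem_univ v), Finset.card_univ]
      omega
    rw [Nat.div_le_iff_le_mul_add_pred (by norm_num)]
    omega
  -- maximal matching
  set F : Finset (Finset (Sym2 V)) :=
    S.powerset.filter (fun M => ∀ e ∈ M, ∀ f ∈ M, e ≠ f → ∀ x : V, x ∈ e → x ∉ f) with hFdef
  have hFne : F.Nonempty := ⟨∅, by simp [hFdef]⟩
  obtain ⟨M, hMF, hmax⟩ := Finset.exists_max_image F Finset.card hFne
  rw [hFdef, Finset.mem_filter, Finset.mem_powerset] at hMF
  obtain ⟨hMS, hMdisj⟩ := hMF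
  -- maximality: every e ∈ S meets a matching edge
  have hmeet : ∀ e ∈ S, ∃ x, x ∈ e ∧ ∃ f ∈ M, x ∈ f := by
    intro e heS
    by_contra hc
    push_neg at hc
    have heM : e ∉ M := by
      intro heM
      obtain ⟨a, b⟩ := e
      exact hc a (Sym2.mem_mk_left a b) _ heM (Sym2.mem_mk_left a b)
    have hins : insert e M ∈ F := by
      rw [hFdef, Finset.mem_filter, Finset.mem_powerset]
      refine ⟨Finset.insert_subset heS hMS, ?_⟩
      intro e1 he1 e2 he2 hne x hx
      rcases Finset.mem_insert.mp he1 with h1 | h1 <;>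
        rcases Finset.mem_insert.mp he2 with h2 | h2
      · exact absurd (h1.trans h2.symm) hne
      · exact hc x (h1 ▸ hx) e2 h2
      · intro hx2
        exact hc x (h2 ▸ hx2) e1 h1 hx
      · exact hMdisj e1 h1 e2 h2 hne x hx
    have := hmax _ hins
    rw [Finset.card_insert_of_notMem heM] at this
    omega
  -- vertices covered by M
  set T : Finset V := M.biUnion (fun f => Finset.univ.filter (· ∈ f)) with hTdef
  have hTcard : T.card ≤ 2 * M.card := by
    calc T.card ≤ ∑ f ∈ M, (Finset.univ.filter (· ∈ f)).card := Finset.card_biUnion_le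
      _ ≤ M.card * 2 := Finset.sum_le_card_nsmul M _ 2 (fun f _ => mem_card f)
      _ = 2 * M.card := Nat.mul_comm _ _
  have hTnv : v ∉ T := by
    rw [hTdef, Finset.mem_biUnion]
    rintro ⟨f, hf, hvf⟩
    have := hMS hf
    rw [hSdef, Finset.mem_filter] at this
    exact this.2 (by simpa using hvf)
  -- choose a covered vertex in each edge of S
  have hh : ∀ e : Sym2 V, ∃ x, e ∈ S → x ∈ e ∧ x ∈ T := by
    intro e
    by_cases he : e ∈ S
    · obtain ⟨x, hx1, f, hf, hxf⟩ := hmeet e he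
      exact ⟨x, fun _ => ⟨hx1, Finset.mem_biUnion.mpr ⟨f, hf, by simp [hxf]⟩⟩⟩
    · exact ⟨v, fun h => absurd h he⟩
  choose h hhspec using hh
  -- upper bound: S.card ≤ (Δ-1) * (2 * M.card)
  have hup : S.card ≤ (Δ - 1) * (2 * M.card) := by
    have h1 : S.card ≤ (Δ - 1) * (S.image h).card := by
      apply Finset.card_le_mul_card_image
      intro x hx
      rw [Finset.mem_image] at hx
      obtain ⟨e0, he0, rfl⟩ := hx
      have hxT : h e0 ∈ T := (hhspec e0 he0).2
      have hxv : h e0 ≠ v := fun h' => hTnv (h' ▸ hxT)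
      calc (S.filter (fun e => h e = h e0)).card
          ≤ ((G'.incidenceFinset (h e0)) \ {s(h e0, v)}).card := by
            apply Finset.card_le_card
            intro e he
            rw [Finset.mem_filter] at he
            obtain ⟨heS, hee⟩ := he
            have hxe : h e0 ∈ e := hee ▸ (hhspec e heS).1
            rw [hSdef, Finset.mem_filter] at heS
            rw [Finset.mem_sdiff, Finset.mem_singleton, G'.mem_incidenceFinset]
            refine ⟨⟨SimpleGraph.mem_edgeFinset.mp heS.1, hxe⟩, ?_⟩
            rintro rfl
            exact heS.2 (Sym2.mem_mk_right _ _)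
        _ ≤ Δ - 1 := by
            have hsub' : ({s(h e0, v)} : Finset (Sym2 V)) ⊆ G'.incidenceFinset (h e0) := by
              intro e he
              rw [Finset.mem_singleton] at he
              subst he
              rw [G'.mem_incidenceFinset]
              exact ⟨(G'.mem_edgeSet).mpr ((hv (h e0) hxv).symm), Sym2.mem_mk_left _ _⟩
            rw [Finset.card_sdiff_of_subset hsub', Finset.card_singleton,
              G'.card_incidenceFinset_eq_degree]
            have := hΔ (h e0) hxv
            omega
    have h2 : S.image h ⊆ T := by
      intro x hx
      rw [Finset.mem_image] at hx
      obtain ⟨e, he, rfl⟩ := hx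
      exact (hhspec e he).2
    calc S.card ≤ (Δ - 1) * (S.image h).card := h1
      _ ≤ (Δ - 1) * T.card := Nat.mul_le_mul_left _ (Finset.card_le_card h2)
      _ ≤ (Δ - 1) * (2 * M.card) := Nat.mul_le_mul_left _ hTcard
  -- conclude
  refine ⟨M, fun e he => (Finset.mem_filter.mp (hMS he)).1, hMdisj,
    fun e he => (Finset.mem_filter.mp (hMS he)).2, ?_⟩
  have hk : 0 < 2 * Δ - 1 := by omega
  have hfin : Fintype.card V / 2 ≤ (2 * Δ - 1) * M.card := by
    calc Fintype.card V / 2 ≤ S.card := hlow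
      _ ≤ (Δ - 1) * (2 * M.card) := hup
      _ = ((Δ - 1) * 2) * M.card := by rw [Nat.mul_assoc]
      _ ≤ (2 * Δ - 1) * M.card := Nat.mul_le_mul_right _ (by omega)
  calc Fintype.card V / 2 / (2 * Δ - 1) ≤ (2 * Δ - 1) * M.card / (2 * Δ - 1) :=
      Nat.div_le_div_right hfin
    _ = M.card := Nat.mul_div_cancel_left _ hk
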